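/- In a hidden Markov chain model, the entropies of future partial state sequences given the current state satisfy the backward recursion: for 0 ≤ t ≤ T−2 and every state j with P(S_t = j, X_{t+1}^{T−1} = x_{t+1}^{T−1}) > 0, H(S_{t+1}^{T−1} | S_t = j, X_{t+1}^{T−1} = x_{t+1}^{T−1}) = Σ_k P(S_{t+1} = k | S_t = j, X_{t+1}^{T−1} = x_{t+1}^{T−1}) { H(S_{t+2}^{T−1} | S_{t+1} = k, X_{t+2}^{T−1} = x_{t+2}^{T−1}) − log P(S_{t+1} = k | S_t = j, X_{t+1}^{T−1} = x_{t+1}^{T−1}) }, the sum ranging over the states k with positive conditional probability, and with the inner entropy term read as 0 when t = T−2. -/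

import Mathlib

/-- A hidden Markov chain (HMC) model with `J` states, observation alphabet
`{0, …, V-1}` and sequence length `T`: initial probabilities, transition
probabilities and emission probabilities. -/
structure HMCModel (J V T : ℕ) where
  init : Fin J → ℝ
  trans : Fin J → Fin J → ℝ
  emit : Fin J → Fin V → ℝ
  init_nonneg : ∀ j, 0 ≤ init j
  init_sum : ∑ j, init j = 1
  trans_nonneg : ∀ i j, 0 ≤ trans i j
  trans_sum : ∀ i, ∑ j, trans i j = 1
  emit_nonneg : ∀ j y, 0 ≤ emit j y
  emit_sum : ∀ j, ∑ y, emit j y = 1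

namespace HMCModel

variable {J V T : ℕ} [NeZero J] [NeZero T]

/-- The joint law of the state sequence and the observed sequence:
`P(S = s, X = x) = π_{s_0} b_{s_0}(x_0) ∏_{t=1}^{T-1} p_{s_{t-1} s_t} b_{s_t}(x_t)`. -/
noncomputable def joint (M : HMCModel J V T) (s : Fin T → Fin J) (x : Fin T → Fin V) : ℝ :=
  M.init (s 0) * M.emit (s 0) (x 0) *
    ∏ t ∈ Finset.univ.filter (fun t : Fin T => t ≠ 0),
      M.trans (s (t - 1)) (s t) * M.emit (s t) (x t)

open Classical in
/-- Probability of an event on (state sequence, observed sequence). -/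
noncomputable def pr (M : HMCModel J V T)
    (E : (Fin T → Fin J) → (Fin T → Fin V) → Prop) : ℝ :=
  ∑ s : Fin T → Fin J, ∑ y : Fin T → Fin V, if E s y then M.joint s y else 0

/-- Conditional probability `P(A | B)`; it is `0` when the conditioning event
has probability zero. -/
noncomputable def cpr (M : HMCModel J V T)
    (A B : (Fin T → Fin J) → (Fin T → Fin V) → Prop) : ℝ :=
  if 0 < M.pr B then M.pr (fun s y => A s y ∧ B s y) / M.pr B else 0

/-- Entropy of the random vector `f(S)` given the event `E`
(natural logarithm, with the convention `0 log 0 = 0`). -/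
noncomputable def condEnt (M : HMCModel J V T) {α : Type*} [Fintype α]
    (f : (Fin T → Fin J) → α)
    (E : (Fin T → Fin J) → (Fin T → Fin V) → Prop) : ℝ :=
  -∑ a : α, M.cpr (fun s _ => f s = a) E * Real.log (M.cpr (fun s _ => f s = a) E)

/-- Entropy of `f(S)` given the random vector `g(S)` and the event `E`:
`H(f(S) | g(S), E) = ∑_c P(g(S) = c | E) H(f(S) | g(S) = c, E)`. -/
noncomputable def condEntGiven (M : HMCModel J V T) {α β : Type*} [Fintype α] [Fintype β]
    (f : (Fin T → Fin J) → α) (g : (Fin T → Fin J) → β)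
    (E : (Fin T → Fin J) → (Fin T → Fin V) → Prop) : ℝ :=
  ∑ c : β, M.cpr (fun s _ => g s = c) E * M.condEnt f (fun s y => g s = c ∧ E s y)

/-- The event `X = x`. -/
def obsEq (x : Fin T → Fin V) : (Fin T → Fin J) → (Fin T → Fin V) → Prop :=
  fun _ y => y = x

/-- The partial state vector `S_0^{t-1}` (coordinates `≥ t` are padded by `0`). -/
def prefixVar (t : ℕ) (s : Fin T → Fin J) : Fin T → Fin J :=
  fun r => if (r : ℕ) < t then s r else 0

/-- The partial state vector `S_t^{T-1}` (coordinates `< t` are padded by `0`). -/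
def suffixVar (t : ℕ) (s : Fin T → Fin J) : Fin T → Fin J :=
  fun r => if t ≤ (r : ℕ) then s r else 0

end HMCModel

namespace HMCModel

variable {J V T : ℕ} [NeZero J] [NeZero T]

variable (M : HMCModel J V T)

theorem joint_nonneg (s : Fin T → Fin J) (y : Fin T → Fin V) : 0 ≤ M.joint s y := by
  unfold joint
  apply mul_nonneg (mul_nonneg (M.init_nonneg _) (M.emit_nonneg _ _))
  exact Finset.prod_nonneg fun t _ => mul_nonneg (M.trans_nonneg _ _) (M.emit_nonneg _ _)

theorem pr_nonneg (E : (Fin T → Fin J) → (Fin T → Fin V) → Prop) : 0 ≤ M.pr E := by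
  unfold pr
  refine Finset.sum_nonneg fun s _ => Finset.sum_nonneg fun y _ => ?_
  split
  · exact M.joint_nonneg s y
  · exact le_refl 0

theorem pr_congr {E E' : (Fin T → Fin J) → (Fin T → Fin V) → Prop}
    (h : ∀ s y, E s y ↔ E' s y) : M.pr E = M.pr E' := by
  classical
  unfold pr
  exact Finset.sum_congr rfl fun s _ => Finset.sum_congr rfl fun y _ =>
    if_congr (h s y) rfl rfl

theorem pr_mono {E E' : (Fin T → Fin J) → (Fin T → Fin V) → Prop}
    (h : ∀ s y, E s y → E' s y) : M.pr E ≤ M.pr E' := by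
  classical
  unfold pr
  refine Finset.sum_le_sum fun s _ => Finset.sum_le_sum fun y _ => ?_
  by_cases hE : E s y
  · rw [if_pos hE, if_pos (h s y hE)]
  · rw [if_neg hE]
    split
    · exact M.joint_nonneg s y
    · exact le_refl 0

theorem pr_eq_zero {E : (Fin T → Fin J) → (Fin T → Fin V) → Prop}
    (h : ∀ s y, ¬ E s y) : M.pr E = 0 := by
  unfold pr
  refine Finset.sum_eq_zero fun s _ => Finset.sum_eq_zero fun y _ => if_neg (h s y)

theorem pr_partition {α : Type*} [Fintype α] (f : (Fin T → Fin J) → α)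
    (E : (Fin T → Fin J) → (Fin T → Fin V) → Prop) :
    ∑ a : α, M.pr (fun s y => f s = a ∧ E s y) = M.pr E := by
  classical
  unfold pr
  rw [Finset.sum_comm]
  refine Finset.sum_congr rfl fun s _ => ?_
  rw [Finset.sum_comm]
  refine Finset.sum_congr rfl fun y _ => ?_
  refine Eq.trans (Finset.sum_congr rfl
    (g := fun a => if f s = a then (if E s y then M.joint s y else 0) else 0)
    fun a _ => ?_) ?_
  · by_cases h1 : f s = a <;> by_cases h2 : E s y <;> simp [h1, h2]
  · rw [Finset.sum_ite_eq Finset.univ (f s)]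
    simp

theorem cpr_nonneg (A B : (Fin T → Fin J) → (Fin T → Fin V) → Prop) :
    0 ≤ M.cpr A B := by
  unfold cpr
  split
  · exact div_nonneg (M.pr_nonneg _) (M.pr_nonneg _)
  · exact le_refl 0

theorem cpr_congr {A A' B B' : (Fin T → Fin J) → (Fin T → Fin V) → Prop}
    (hA : ∀ s y, A s y ↔ A' s y) (hB : ∀ s y, B s y ↔ B' s y) :
    M.cpr A B = M.cpr A' B' := by
  unfold cpr
  rw [M.pr_congr hB, M.pr_congr (E := fun s y => A s y ∧ B s y)
    (E' := fun s y => A' s y ∧ B' s y) (fun s y => and_congr (hA s y) (hB s y))]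

theorem cpr_eq_zero {A B : (Fin T → Fin J) → (Fin T → Fin V) → Prop}
    (h : ∀ s y, ¬ (A s y ∧ B s y)) : M.cpr A B = 0 := by
  unfold cpr
  rw [M.pr_eq_zero h]
  simp

theorem sum_cpr {α : Type*} [Fintype α] (f : (Fin T → Fin J) → α)
    {E : (Fin T → Fin J) → (Fin T → Fin V) → Prop} (hE : 0 < M.pr E) :
    ∑ a : α, M.cpr (fun s _ => f s = a) E = 1 := by
  unfold cpr
  simp only [if_pos hE]
  rw [← Finset.sum_div, M.pr_partition f E, div_self (ne_of_gt hE)]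

theorem cpr_mul (A B E : (Fin T → Fin J) → (Fin T → Fin V) → Prop) (hE : 0 < M.pr E) :
    M.cpr (fun s y => A s y ∧ B s y) E
      = M.cpr B E * M.cpr A (fun s y => B s y ∧ E s y) := by
  unfold cpr
  rw [if_pos hE]
  by_cases hBE : 0 < M.pr (fun s y => B s y ∧ E s y)
  · rw [if_pos hE, if_pos hBE]
    have h1 : M.pr (fun s y => (A s y ∧ B s y) ∧ E s y)
        = M.pr (fun s y => A s y ∧ B s y ∧ E s y) := M.pr_congr (by tauto)
    rw [h1]
    field_simp
  · rw [if_neg hBE, mul_zero]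
    have h0 : M.pr (fun s y => B s y ∧ E s y) = 0 :=
      le_antisymm (not_lt.mp hBE) (M.pr_nonneg _)
    have h2 : M.pr (fun s y => (A s y ∧ B s y) ∧ E s y) = 0 := by
      refine le_antisymm ?_ (M.pr_nonneg _)
      rw [← h0]
      exact M.pr_mono (by tauto)
    rw [h2, zero_div]

theorem condEnt_suffix_top {u : ℕ} (hu : T ≤ u)
    (E : (Fin T → Fin J) → (Fin T → Fin V) → Prop) :
    M.condEnt (suffixVar u) E = 0 := by
  unfold condEnt
  rw [neg_eq_zero]
  refine Finset.sum_eq_zero fun a _ => ?_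
  have hconst : ∀ s : Fin T → Fin J, suffixVar u s = (fun _ => 0 : Fin T → Fin J) := by
    intro s
    funext r
    exact if_neg (by have := r.isLt; omega)
  by_cases ha : (fun _ => (0 : Fin J) : Fin T → Fin J) = a
  · have h1 : M.cpr (fun s _ => suffixVar u s = a) E = M.cpr (fun _ _ => True) E := by
      refine M.cpr_congr (fun s y => ?_) (fun _ _ => Iff.rfl)
      rw [hconst s]
      simp [ha]
    rw [h1]
    unfold cpr
    split
    · rw [M.pr_congr (E := fun s y => True ∧ E s y) (E' := E) (fun s y => by simp)]
      rw [div_self (by positivity), Real.log_one, mul_zero]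
    · simp
  · rw [M.cpr_eq_zero (fun s y h => ha (by rw [← hconst s]; exact h.1))]
    simp

open Classical in
theorem sum_override {α : Type*} [Fintype α] {n : ℕ} (p : Fin n → Prop)
    (F : (Fin n → α) → ℝ)
    (hF : ∀ s s' : Fin n → α, (∀ r, ¬ p r → s r = s' r) → F s = F s')
    (w w' : Fin n → α) :
    (∑ s : Fin n → α, if (∀ r, p r → s r = w r) then F s else 0)
      = ∑ s : Fin n → α, if (∀ r, p r → s r = w' r) then F s else 0 := by
  classical
  rw [← Finset.sum_filter, ← Finset.sum_filter]
  refine Finset.sum_nbij' (i := fun s r => if p r then w' r else s r)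
    (j := fun s r => if p r then w r else s r) ?_ ?_ ?_ ?_ ?_
  · intro s hs
    simp only [Finset.mem_filter, Finset.mem_univ, true_and] at *
    intro r hr
    rw [if_pos hr]
  · intro s hs
    simp only [Finset.mem_filter, Finset.mem_univ, true_and] at *
    intro r hr
    rw [if_pos hr]
  · intro s hs
    simp only [Finset.mem_filter, Finset.mem_univ, true_and] at hs
    funext r
    by_cases hr : p r
    · simp only [if_pos hr]
      exact (hs r hr).symm
    · simp only [if_neg hr]
  · intro s hs
    simp only [Finset.mem_filter, Finset.mem_univ, true_and] at hs
    funext r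
    by_cases hr : p r
    · simp only [if_pos hr]
      exact (hs r hr).symm
    · simp only [if_neg hr]
  · intro s hs
    refine hF s _ fun r hr => ?_
    show s r = if p r then w' r else s r
    rw [if_neg hr]

theorem val_sub_one {T : ℕ} [NeZero T] {r : Fin T} (hr : r ≠ 0) : ((r - 1 : Fin T) : ℕ) = (r : ℕ) - 1 := by
  have hT : 0 < T := Fin.pos r
  have h0 : (r : ℕ) ≠ 0 := fun h => hr (Fin.ext (by rw [h]; rfl))
  have hlt := r.isLt
  rw [Fin.sub_def]
  show (T - ((1 : Fin T) : ℕ) + (r : ℕ)) % T = (r : ℕ) - 1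
  rcases Nat.lt_or_ge 1 T with h | h
  · have h1 : ((1 : Fin T) : ℕ) = 1 := by
      have h2 := Fin.val_one' T
      rwa [Nat.mod_eq_of_lt h] at h2
    rw [h1]
    have h3 : T - 1 + (r : ℕ) = ((r : ℕ) - 1) + T := by omega
    rw [h3, Nat.add_mod_right, Nat.mod_eq_of_lt (by omega)]
  · exfalso
    omega

theorem suffixVar_idem (u : ℕ) (s : Fin T → Fin J) :
    suffixVar u (suffixVar u s) = suffixVar u s := by
  funext r
  unfold suffixVar
  by_cases hr : u ≤ (r : ℕ) <;> simp [hr]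

noncomputable def lowPart (u : ℕ) (s : Fin T → Fin J)
    (y : Fin T → Fin V) : ℝ :=
  M.init (s 0) * M.emit (s 0) (y 0) *
    ∏ r ∈ Finset.univ.filter (fun r : Fin T => r ≠ 0 ∧ (r : ℕ) < u),
      M.trans (s (r - 1)) (s r) * M.emit (s r) (y r)

noncomputable def highPart (u : ℕ) (s : Fin T → Fin J)
    (y : Fin T → Fin V) : ℝ :=
  ∏ r ∈ Finset.univ.filter (fun r : Fin T => u ≤ (r : ℕ)),
      M.trans (s (r - 1)) (s r) * M.emit (s r) (y r)

theorem lowPart_nonneg (u : ℕ) (s : Fin T → Fin J) (y : Fin T → Fin V) :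
    0 ≤ M.lowPart u s y := by
  unfold lowPart
  apply mul_nonneg (mul_nonneg (M.init_nonneg _) (M.emit_nonneg _ _))
  exact Finset.prod_nonneg fun r _ => mul_nonneg (M.trans_nonneg _ _) (M.emit_nonneg _ _)

theorem highPart_nonneg (u : ℕ) (s : Fin T → Fin J) (y : Fin T → Fin V) :
    0 ≤ M.highPart u s y :=
  Finset.prod_nonneg fun r _ => mul_nonneg (M.trans_nonneg _ _) (M.emit_nonneg _ _)

theorem joint_split (u : ℕ) (hu : 1 ≤ u) (s : Fin T → Fin J) (y : Fin T → Fin V) :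
    M.joint s y = M.lowPart u s y * M.highPart u s y := by
  classical
  unfold joint lowPart highPart
  rw [mul_assoc (M.init (s 0) * M.emit (s 0) (y 0))]
  congr 1
  rw [← Finset.prod_filter_mul_prod_filter_not
    (Finset.univ.filter (fun r : Fin T => r ≠ 0)) (fun r => (r : ℕ) < u)]
  congr 1
  · rw [Finset.filter_filter]
  · rw [Finset.filter_filter]
    refine Finset.prod_congr (Finset.filter_congr fun r _ => ?_) fun _ _ => rfl
    constructor
    · rintro ⟨h1, h2⟩
      omega
    · intro h
      refine ⟨fun h0 => ?_, by omega⟩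
      rw [h0] at h
      simp at h
      omega

theorem lowPart_congr (u : ℕ) (hu : 1 ≤ u) {s s' : Fin T → Fin J} (y : Fin T → Fin V)
    (h : ∀ r : Fin T, (r : ℕ) < u → s r = s' r) :
    M.lowPart u s y = M.lowPart u s' y := by
  unfold lowPart
  have h0 : (0 : Fin T).val < u := by
    simp only [Fin.val_zero]
    omega
  rw [h 0 h0]
  congr 1
  refine Finset.prod_congr rfl fun r hr => ?_
  simp only [Finset.mem_filter, Finset.mem_univ, true_and] at hr
  obtain ⟨hr0, hru⟩ := hr
  rw [h r hru, h (r - 1) (by rw [val_sub_one hr0]; omega)]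

open Classical in
theorem pr_factor (u : ℕ) (hu2 : 2 ≤ u) (t1 : Fin T) (ht1 : (t1 : ℕ) = u - 1)
    (k : Fin J) (x : Fin T → Fin V) (w : Fin T → Fin J)
    (D : (Fin T → Fin J) → (Fin T → Fin V) → Prop)
    (hDlow : ∀ s s' y, (∀ r : Fin T, (r : ℕ) < u → s r = s' r) → (D s y ↔ D s' y))
    (hDk : ∀ s y, D s y → s t1 = k)
    (hDx : ∀ s y, D s y → ∀ r : Fin T, u ≤ (r : ℕ) → y r = x r) :
    M.pr (fun s y => suffixVar u s = w ∧ D s y)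
      = (∑ s : Fin T → Fin J, ∑ y : Fin T → Fin V,
          if ((∀ r : Fin T, u ≤ (r : ℕ) → s r = 0) ∧ D s y) then M.lowPart u s y else 0)
        * (if suffixVar u w = w then M.highPart u (Function.update w t1 k) x else 0) := by
  classical
  by_cases hw : suffixVar u w = w
  case neg =>
    rw [if_neg hw, mul_zero]
    apply M.pr_eq_zero
    rintro s y ⟨hsw, -⟩
    exact hw (by rw [← hsw]; exact suffixVar_idem u s)
  case pos =>
    rw [if_pos hw]
    have hw0 : ∀ r : Fin T, (r : ℕ) < u → w r = 0 := by
      intro r hr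
      have h := congrFun hw r
      unfold suffixVar at h
      rw [if_neg (by omega)] at h
      exact h.symm
    set U := Function.update w t1 k with hU
    -- pointwise evaluation of the high part
    have highEq : ∀ s y, (∀ r : Fin T, u ≤ (r : ℕ) → s r = w r) → D s y →
        M.highPart u s y = M.highPart u U x := by
      intro s y hsw hD
      unfold highPart
      refine Finset.prod_congr rfl fun r hr => ?_
      simp only [Finset.mem_filter, Finset.mem_univ, true_and] at hr
      have hrne : r ≠ 0 := by
        intro h0
        rw [h0] at hr
        have : ((0 : Fin T) : ℕ) = 0 := rfl
        omega
      have hv : ((r - 1 : Fin T) : ℕ) = (r : ℕ) - 1 := val_sub_one hrne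
      have hyr : y r = x r := hDx s y hD r hr
      have hrt1 : r ≠ t1 := by
        intro h
        rw [h, ht1] at hr
        omega
      have hsr : s r = U r := by
        rw [hsw r hr, hU, Function.update_of_ne hrt1]
      have hsr1 : s (r - 1) = U (r - 1) := by
        by_cases hcase : (r : ℕ) - 1 = u - 1
        · have he : r - 1 = t1 := Fin.ext (by rw [hv, hcase, ht1])
          rw [he, hDk s y hD, hU, Function.update_self]
        · have hge : u ≤ ((r - 1 : Fin T) : ℕ) := by rw [hv]; omega
          have hne : r - 1 ≠ t1 := by
            intro h
            rw [h, ht1] at hv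
            omega
          rw [hsw _ hge, hU, Function.update_of_ne hne]
      rw [hsr, hsr1, hyr]
    -- step 1: pull out the constant high part
    have step1 : M.pr (fun s y => suffixVar u s = w ∧ D s y)
        = (∑ s : Fin T → Fin J, ∑ y : Fin T → Fin V,
            if ((∀ r : Fin T, u ≤ (r : ℕ) → s r = w r) ∧ D s y)
              then M.lowPart u s y else 0) * M.highPart u U x := by
      unfold pr
      rw [Finset.sum_mul]
      refine Finset.sum_congr rfl fun s _ => ?_
      rw [Finset.sum_mul]
      refine Finset.sum_congr rfl fun y _ => ?_
      by_cases h1 : suffixVar u s = w ∧ D s y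
      · have h2 : (∀ r : Fin T, u ≤ (r : ℕ) → s r = w r) ∧ D s y := by
          refine ⟨fun r hr => ?_, h1.2⟩
          have h := congrFun h1.1 r
          unfold suffixVar at h
          rwa [if_pos hr] at h
        rw [if_pos h1, if_pos h2, M.joint_split u (by omega) s y,
          highEq s y h2.1 h1.2]
      · have h2 : ¬ ((∀ r : Fin T, u ≤ (r : ℕ) → s r = w r) ∧ D s y) := by
          rintro ⟨ha, hb⟩
          apply h1
          refine ⟨?_, hb⟩
          funext r
          unfold suffixVar
          by_cases hr : u ≤ (r : ℕ)
          · rw [if_pos hr]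
            exact ha r hr
          · rw [if_neg hr]
            exact (hw0 r (by omega)).symm
        rw [if_neg h1, if_neg h2, zero_mul]
    rw [step1]
    congr 1
    -- step 2: the low factor does not depend on w
    have inner : ∀ (w : Fin T → Fin J) (s : Fin T → Fin J),
        (∑ y : Fin T → Fin V,
            if ((∀ r : Fin T, u ≤ (r : ℕ) → s r = w r) ∧ D s y)
              then M.lowPart u s y else 0)
          = if (∀ r : Fin T, u ≤ (r : ℕ) → s r = w r)
              then (∑ y : Fin T → Fin V, if D s y then M.lowPart u s y else 0) else 0 := by
      intro w s
      by_cases hc : ∀ r : Fin T, u ≤ (r : ℕ) → s r = w r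
      · rw [if_pos hc]
        refine Finset.sum_congr rfl fun y _ => ?_
        by_cases hD : D s y
        · rw [if_pos (⟨hc, hD⟩ : _ ∧ _), if_pos hD]
        · rw [if_neg (fun h : _ ∧ _ => hD h.2), if_neg hD]
      · rw [if_neg hc]
        refine Finset.sum_eq_zero fun y _ => ?_
        rw [if_neg (fun h => hc h.1)]
    have hΦ : ∀ s s' : Fin T → Fin J,
        (∀ r : Fin T, ¬ (u ≤ (r : ℕ)) → s r = s' r) →
        (∑ y : Fin T → Fin V, if D s y then M.lowPart u s y else 0)
          = ∑ y : Fin T → Fin V, if D s' y then M.lowPart u s' y else 0 := by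
      intro s s' hss
      have hlow : ∀ r : Fin T, (r : ℕ) < u → s r = s' r := fun r hr => hss r (by omega)
      refine Finset.sum_congr rfl fun y _ => ?_
      by_cases hD : D s y
      · rw [if_pos hD, if_pos ((hDlow s s' y hlow).mp hD),
          M.lowPart_congr u (by omega) y hlow]
      · rw [if_neg hD, if_neg (fun h => hD ((hDlow s s' y hlow).mpr h))]
    have e1 : (∑ s : Fin T → Fin J, ∑ y : Fin T → Fin V,
            if ((∀ r : Fin T, u ≤ (r : ℕ) → s r = w r) ∧ D s y)
              then M.lowPart u s y else 0)
        = ∑ s : Fin T → Fin J,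
            if (∀ r : Fin T, u ≤ (r : ℕ) → s r = w r)
              then (∑ y : Fin T → Fin V, if D s y then M.lowPart u s y else 0) else 0 :=
      Finset.sum_congr rfl fun s _ => inner w s
    have e3 : (∑ s : Fin T → Fin J, ∑ y : Fin T → Fin V,
            if ((∀ r : Fin T, u ≤ (r : ℕ) → s r = 0) ∧ D s y)
              then M.lowPart u s y else 0)
        = ∑ s : Fin T → Fin J,
            if (∀ r : Fin T, u ≤ (r : ℕ) → s r = 0)
              then (∑ y : Fin T → Fin V, if D s y then M.lowPart u s y else 0) else 0 :=
      Finset.sum_congr rfl fun s _ => inner (fun _ => 0) s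
    rw [e1, e3]
    convert sum_override (fun r : Fin T => u ≤ (r : ℕ))
      (fun s => ∑ y : Fin T → Fin V, if D s y then M.lowPart u s y else 0)
      hΦ w (fun _ => 0) using 2 <;> congr

theorem condEnt_congr {α : Type*} [Fintype α] (f : (Fin T → Fin J) → α)
    {E E' : (Fin T → Fin J) → (Fin T → Fin V) → Prop}
    (h : ∀ s y, E s y ↔ E' s y) : M.condEnt f E = M.condEnt f E' := by
  unfold condEnt
  congr 1
  refine Finset.sum_congr rfl fun a _ => ?_
  rw [M.cpr_congr (fun _ _ => Iff.rfl) h]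

open Classical in
theorem markov_cpr (u : ℕ) (hu2 : 2 ≤ u) (t1 : Fin T) (ht1 : (t1 : ℕ) = u - 1)
    (k : Fin J) (x : Fin T → Fin V)
    (D D' : (Fin T → Fin J) → (Fin T → Fin V) → Prop)
    (hDlow : ∀ s s' y, (∀ r : Fin T, (r : ℕ) < u → s r = s' r) → (D s y ↔ D s' y))
    (hDk : ∀ s y, D s y → s t1 = k)
    (hDx : ∀ s y, D s y → ∀ r : Fin T, u ≤ (r : ℕ) → y r = x r)
    (hDlow' : ∀ s s' y, (∀ r : Fin T, (r : ℕ) < u → s r = s' r) → (D' s y ↔ D' s' y))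
    (hDk' : ∀ s y, D' s y → s t1 = k)
    (hDx' : ∀ s y, D' s y → ∀ r : Fin T, u ≤ (r : ℕ) → y r = x r)
    (hsub : ∀ s y, D s y → D' s y)
    (hpos : 0 < M.pr D) (w : Fin T → Fin J) :
    M.cpr (fun s _ => suffixVar u s = w) D = M.cpr (fun s _ => suffixVar u s = w) D' := by
  classical
  have hpos' : 0 < M.pr D' := lt_of_lt_of_le hpos (M.pr_mono hsub)
  set G : (Fin T → Fin J) → ℝ := fun w =>
    if suffixVar u w = w then M.highPart u (Function.update w t1 k) x else 0 with hG
  set F : ℝ := ∑ s : Fin T → Fin J, ∑ y : Fin T → Fin V,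
    if ((∀ r : Fin T, u ≤ (r : ℕ) → s r = 0) ∧ D s y) then M.lowPart u s y else 0 with hF
  set F' : ℝ := ∑ s : Fin T → Fin J, ∑ y : Fin T → Fin V,
    if ((∀ r : Fin T, u ≤ (r : ℕ) → s r = 0) ∧ D' s y) then M.lowPart u s y else 0 with hF'
  have hfac : ∀ w, M.pr (fun s y => suffixVar u s = w ∧ D s y) = F * G w := fun w =>
    M.pr_factor u hu2 t1 ht1 k x w D hDlow hDk hDx
  have hfac' : ∀ w, M.pr (fun s y => suffixVar u s = w ∧ D' s y) = F' * G w := fun w =>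
    M.pr_factor u hu2 t1 ht1 k x w D' hDlow' hDk' hDx'
  have hGnn : ∀ w, 0 ≤ G w := by
    intro w
    rw [hG]
    dsimp only
    split
    · exact M.highPart_nonneg _ _ _
    · exact le_refl 0
  have hFnn : 0 ≤ F := by
    rw [hF]
    refine Finset.sum_nonneg fun s _ => Finset.sum_nonneg fun y _ => ?_
    split
    · exact M.lowPart_nonneg _ _ _
    · exact le_refl 0
  have hF'nn : 0 ≤ F' := by
    rw [hF']
    refine Finset.sum_nonneg fun s _ => Finset.sum_nonneg fun y _ => ?_
    split
    · exact M.lowPart_nonneg _ _ _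
    · exact le_refl 0
  have hprD : M.pr D = F * ∑ w : Fin T → Fin J, G w := by
    rw [← M.pr_partition (suffixVar u) D, Finset.mul_sum]
    exact Finset.sum_congr rfl fun w _ => hfac w
  have hprD' : M.pr D' = F' * ∑ w : Fin T → Fin J, G w := by
    rw [← M.pr_partition (suffixVar u) D', Finset.mul_sum]
    exact Finset.sum_congr rfl fun w _ => hfac' w
  have hSGnn : 0 ≤ ∑ w : Fin T → Fin J, G w := Finset.sum_nonneg fun w _ => hGnn w
  have hFpos : 0 < F := by
    rcases lt_or_eq_of_le hFnn with h | h
    · exact h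
    · exfalso
      rw [hprD, ← h, zero_mul] at hpos
      exact lt_irrefl 0 hpos
  have hSGpos : 0 < ∑ w : Fin T → Fin J, G w := by
    rcases lt_or_eq_of_le hSGnn with h | h
    · exact h
    · exfalso
      rw [hprD, ← h, mul_zero] at hpos
      exact lt_irrefl 0 hpos
  have hF'pos : 0 < F' := by
    rcases lt_or_eq_of_le hF'nn with h | h
    · exact h
    · exfalso
      rw [hprD', ← h, zero_mul] at hpos'
      exact lt_irrefl 0 hpos'
  unfold cpr
  rw [if_pos hpos, if_pos hpos']
  have e1 : M.pr (fun s y => suffixVar u s = w ∧ D s y) = F * G w := hfac w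
  have e2 : M.pr (fun s y => suffixVar u s = w ∧ D' s y) = F' * G w := hfac' w
  rw [e1, e2, hprD, hprD']
  rw [mul_div_mul_left _ _ (ne_of_gt hFpos), mul_div_mul_left _ _ (ne_of_gt hF'pos)]

open Classical in
theorem markov_condEnt (u : ℕ) (hu2 : 2 ≤ u) (t1 : Fin T) (ht1 : (t1 : ℕ) = u - 1)
    (k : Fin J) (x : Fin T → Fin V)
    (D D' : (Fin T → Fin J) → (Fin T → Fin V) → Prop)
    (hDlow : ∀ s s' y, (∀ r : Fin T, (r : ℕ) < u → s r = s' r) → (D s y ↔ D s' y))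
    (hDk : ∀ s y, D s y → s t1 = k)
    (hDx : ∀ s y, D s y → ∀ r : Fin T, u ≤ (r : ℕ) → y r = x r)
    (hDlow' : ∀ s s' y, (∀ r : Fin T, (r : ℕ) < u → s r = s' r) → (D' s y ↔ D' s' y))
    (hDk' : ∀ s y, D' s y → s t1 = k)
    (hDx' : ∀ s y, D' s y → ∀ r : Fin T, u ≤ (r : ℕ) → y r = x r)
    (hsub : ∀ s y, D s y → D' s y)
    (hpos : 0 < M.pr D) :
    M.condEnt (suffixVar u) D = M.condEnt (suffixVar u) D' := by
  unfold condEnt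
  congr 1
  refine Finset.sum_congr rfl fun w _ => ?_
  rw [M.markov_cpr u hu2 t1 ht1 k x D D' hDlow hDk hDx hDlow' hDk' hDx' hsub hpos w]

theorem xlogx_mul (a b : ℝ) :
    (a * b) * Real.log (a * b) = (a * Real.log a) * b + a * (b * Real.log b) := by
  by_cases ha : a = 0
  · simp [ha]
  by_cases hb : b = 0
  · simp [hb]
  rw [Real.log_mul ha hb]
  ring

open Classical in
theorem chain_rule (u : ℕ) (t1 : Fin T) (ht1 : (t1 : ℕ) = u)
    (E : (Fin T → Fin J) → (Fin T → Fin V) → Prop) (hpos : 0 < M.pr E) :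
    M.condEnt (suffixVar u) E
      = ∑ k : Fin J,
          (M.cpr (fun s _ => s t1 = k) E
              * M.condEnt (suffixVar (u + 1)) (fun s y => s t1 = k ∧ E s y)
            - M.cpr (fun s _ => s t1 = k) E
              * Real.log (M.cpr (fun s _ => s t1 = k) E)) := by
  classical
  have hvalid : ∀ (m : ℕ) (v : Fin T → Fin J) (a : Fin T → Fin J),
      suffixVar m a = v → suffixVar m v = v := by
    intro m v a h
    rw [← h]
    exact suffixVar_idem m a
  -- decomposition of the conditional probability
  have hdecomp : ∀ v : Fin T → Fin J, suffixVar u v = v →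
      M.cpr (fun s _ => suffixVar u s = v) E
        = M.cpr (fun s _ => s t1 = v t1) E
          * M.cpr (fun s _ => suffixVar (u + 1) s = suffixVar (u + 1) v)
              (fun s y => s t1 = v t1 ∧ E s y) := by
    intro v hv
    have hiff : ∀ s : Fin T → Fin J,
        suffixVar u s = v
          ↔ (suffixVar (u + 1) s = suffixVar (u + 1) v ∧ s t1 = v t1) := by
      intro s
      constructor
      · intro h
        constructor
        · funext r
          unfold suffixVar
          by_cases hr : u + 1 ≤ (r : ℕ)
          · rw [if_pos hr, if_pos hr]
            have := congrFun h r
            unfold suffixVar at this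
            rwa [if_pos (by omega)] at this
          · rw [if_neg hr, if_neg hr]
        · have := congrFun h t1
          unfold suffixVar at this
          rwa [if_pos (by omega)] at this
      · rintro ⟨h1, h2⟩
        funext r
        unfold suffixVar
        by_cases hr : u ≤ (r : ℕ)
        · rw [if_pos hr]
          by_cases hr1 : u + 1 ≤ (r : ℕ)
          · have := congrFun h1 r
            unfold suffixVar at this
            rw [if_pos hr1, if_pos hr1] at this
            exact this
          · have hrt1 : r = t1 := Fin.ext (by omega)
            rw [hrt1, h2]
        · rw [if_neg hr]
          have := congrFun hv r
          unfold suffixVar at this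
          rw [if_neg hr] at this
          exact this
    rw [M.cpr_congr (A' := fun s _ =>
        suffixVar (u + 1) s = suffixVar (u + 1) v ∧ s t1 = v t1)
        (fun s y => hiff s) (fun _ _ => Iff.rfl)]
    exact M.cpr_mul (fun s _ => suffixVar (u + 1) s = suffixVar (u + 1) v)
      (fun s _ => s t1 = v t1) E hpos
  -- invalid suffix vectors carry no mass
  have hzero1 : ∀ v : Fin T → Fin J, ¬ (suffixVar u v = v) →
      M.cpr (fun s _ => suffixVar u s = v) E = 0 := by
    intro v hv
    exact M.cpr_eq_zero fun s y h => hv (hvalid u v s h.1)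
  have hzero2 : ∀ (k : Fin J) (w : Fin T → Fin J), ¬ (suffixVar (u + 1) w = w) →
      M.cpr (fun s _ => suffixVar (u + 1) s = w) (fun s y => s t1 = k ∧ E s y) = 0 := by
    intro k w hw
    exact M.cpr_eq_zero fun s y h => hw (hvalid (u + 1) w s h.1)
  unfold condEnt
  -- restrict the sum to valid suffix vectors
  have hrestrict : ∑ v : Fin T → Fin J,
        M.cpr (fun s _ => suffixVar u s = v) E
          * Real.log (M.cpr (fun s _ => suffixVar u s = v) E)
      = ∑ v ∈ Finset.univ.filter (fun v : Fin T → Fin J => suffixVar u v = v),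
          M.cpr (fun s _ => suffixVar u s = v) E
            * Real.log (M.cpr (fun s _ => suffixVar u s = v) E) := by
    refine (Finset.sum_filter_of_ne fun v _ hne => ?_).symm
    by_contra hv
    rw [hzero1 v hv, zero_mul] at hne
    exact hne rfl
  -- reindex by (state at t1, suffix from u+1)
  have hbij : ∑ v ∈ Finset.univ.filter (fun v : Fin T → Fin J => suffixVar u v = v),
        M.cpr (fun s _ => suffixVar u s = v) E
          * Real.log (M.cpr (fun s _ => suffixVar u s = v) E)
      = ∑ kw ∈ (Finset.univ : Finset (Fin J)) ×ˢ
            Finset.univ.filter (fun w : Fin T → Fin J => suffixVar (u + 1) w = w),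
          (M.cpr (fun s _ => s t1 = kw.1) E
              * M.cpr (fun s _ => suffixVar (u + 1) s = kw.2)
                  (fun s y => s t1 = kw.1 ∧ E s y))
            * Real.log (M.cpr (fun s _ => s t1 = kw.1) E
              * M.cpr (fun s _ => suffixVar (u + 1) s = kw.2)
                  (fun s y => s t1 = kw.1 ∧ E s y)) := by
    refine Finset.sum_nbij' (i := fun v => (v t1, suffixVar (u + 1) v))
      (j := fun kw => Function.update kw.2 t1 kw.1) ?_ ?_ ?_ ?_ ?_
    · intro v hv
      simp only [Finset.mem_product, Finset.mem_filter, Finset.mem_univ, true_and]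
      exact suffixVar_idem (u + 1) v
    · intro kw hkw
      simp only [Finset.mem_product, Finset.mem_filter, Finset.mem_univ, true_and] at hkw
      simp only [Finset.mem_filter, Finset.mem_univ, true_and]
      have hw0 : ∀ r : Fin T, (r : ℕ) < u + 1 → kw.2 r = 0 := by
        intro r hr
        have := congrFun hkw r
        unfold suffixVar at this
        rw [if_neg (by omega)] at this
        exact this.symm
      funext r
      show suffixVar u (Function.update kw.2 t1 kw.1) r = Function.update kw.2 t1 kw.1 r
      unfold suffixVar
      by_cases hr : u ≤ (r : ℕ)
      · rw [if_pos hr]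
      · rw [if_neg hr]
        have hrt1 : r ≠ t1 := fun h => hr (by rw [h, ht1])
        rw [Function.update_of_ne hrt1, (hw0 r (by omega))]
    · intro v hv
      simp only [Finset.mem_filter, Finset.mem_univ, true_and] at hv
      show Function.update (suffixVar (u + 1) v) t1 (v t1) = v
      funext r
      by_cases hrt1 : r = t1
      · rw [hrt1, Function.update_self]
      · rw [Function.update_of_ne hrt1]
        show suffixVar (u + 1) v r = v r
        unfold suffixVar
        by_cases hr : u + 1 ≤ (r : ℕ)
        · rw [if_pos hr]
        · have hru : (r : ℕ) < u := by
            rcases Nat.lt_or_ge (r : ℕ) u with h | h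
            · exact h
            · exfalso
              exact hrt1 (Fin.ext (by omega))
          have := congrFun hv r
          unfold suffixVar at this
          rw [if_neg (by omega)] at this
          rw [if_neg hr]
          exact this
    · intro kw hkw
      simp only [Finset.mem_product, Finset.mem_filter, Finset.mem_univ, true_and] at hkw
      have hw0 : ∀ r : Fin T, (r : ℕ) < u + 1 → kw.2 r = 0 := by
        intro r hr
        have := congrFun hkw r
        unfold suffixVar at this
        rw [if_neg (by omega)] at this
        exact this.symm
      have h1 : (Function.update kw.2 t1 kw.1) t1 = kw.1 := Function.update_self _ _ _
      have h2 : suffixVar (u + 1) (Function.update kw.2 t1 kw.1) = kw.2 := by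
        funext r
        unfold suffixVar
        by_cases hr : u + 1 ≤ (r : ℕ)
        · rw [if_pos hr, Function.update_of_ne (fun h => by rw [h, ht1] at hr; omega)]
        · rw [if_neg hr, (hw0 r (by omega))]
      show ((Function.update kw.2 t1 kw.1) t1, suffixVar (u + 1) (Function.update kw.2 t1 kw.1)) = kw
      rw [h1, h2]
    · intro v hv
      simp only [Finset.mem_filter, Finset.mem_univ, true_and] at hv
      show _ = _
      rw [hdecomp v hv]
  rw [hrestrict, hbij, Finset.sum_product]
  -- now work per state k
  rw [neg_eq_iff_eq_neg, ← Finset.sum_neg_distrib]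
  refine Finset.sum_congr rfl fun k _ => ?_
  -- extend the inner sum over all w
  have hext : ∑ w ∈ Finset.univ.filter (fun w : Fin T → Fin J => suffixVar (u + 1) w = w),
        (M.cpr (fun s _ => s t1 = k) E
            * M.cpr (fun s _ => suffixVar (u + 1) s = w) (fun s y => s t1 = k ∧ E s y))
          * Real.log (M.cpr (fun s _ => s t1 = k) E
            * M.cpr (fun s _ => suffixVar (u + 1) s = w) (fun s y => s t1 = k ∧ E s y))
      = ∑ w : Fin T → Fin J,
        (M.cpr (fun s _ => s t1 = k) E
            * M.cpr (fun s _ => suffixVar (u + 1) s = w) (fun s y => s t1 = k ∧ E s y))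
          * Real.log (M.cpr (fun s _ => s t1 = k) E
            * M.cpr (fun s _ => suffixVar (u + 1) s = w) (fun s y => s t1 = k ∧ E s y)) := by
    refine Finset.sum_filter_of_ne fun w _ hne => ?_
    by_contra hw
    rw [hzero2 k w hw, mul_zero, zero_mul] at hne
    exact hne rfl
  rw [hext]
  -- split the logarithm
  have hsplit : ∀ w : Fin T → Fin J,
      (M.cpr (fun s _ => s t1 = k) E
          * M.cpr (fun s _ => suffixVar (u + 1) s = w) (fun s y => s t1 = k ∧ E s y))
        * Real.log (M.cpr (fun s _ => s t1 = k) E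
          * M.cpr (fun s _ => suffixVar (u + 1) s = w) (fun s y => s t1 = k ∧ E s y))
      = (M.cpr (fun s _ => s t1 = k) E * Real.log (M.cpr (fun s _ => s t1 = k) E))
          * M.cpr (fun s _ => suffixVar (u + 1) s = w) (fun s y => s t1 = k ∧ E s y)
        + M.cpr (fun s _ => s t1 = k) E
          * (M.cpr (fun s _ => suffixVar (u + 1) s = w) (fun s y => s t1 = k ∧ E s y)
            * Real.log (M.cpr (fun s _ => suffixVar (u + 1) s = w)
                (fun s y => s t1 = k ∧ E s y))) := fun w => xlogx_mul _ _
  rw [Finset.sum_congr rfl fun w _ => hsplit w, Finset.sum_add_distrib,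
    ← Finset.mul_sum, ← Finset.mul_sum]
  -- evaluate the total mass of the inner conditional law
  have hmass : (M.cpr (fun s _ => s t1 = k) E * Real.log (M.cpr (fun s _ => s t1 = k) E))
        * (∑ w : Fin T → Fin J,
            M.cpr (fun s _ => suffixVar (u + 1) s = w) (fun s y => s t1 = k ∧ E s y))
      = M.cpr (fun s _ => s t1 = k) E * Real.log (M.cpr (fun s _ => s t1 = k) E) := by
    by_cases hEk : 0 < M.pr (fun s y => s t1 = k ∧ E s y)
    · rw [M.sum_cpr (suffixVar (u + 1)) hEk, mul_one]
    · have hq0 : M.cpr (fun s _ => s t1 = k) E = 0 := by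
        unfold cpr
        rw [if_pos hpos]
        have : M.pr (fun s y => s t1 = k ∧ E s y) = 0 :=
          le_antisymm (not_lt.mp hEk) (M.pr_nonneg _)
        rw [this, zero_div]
      rw [hq0, zero_mul, zero_mul]
  rw [hmass]
  ring
end HMCModel

open HMCModel

/-- In a hidden Markov chain model, the entropies of future partial
state sequences given the current state satisfy the backward recursion: for
`0 ≤ t ≤ T-2` and every state `j` with `P(S_t = j, X_{t+1}^{T-1} = x_{t+1}^{T-1}) > 0`,
`H(S_{t+1}^{T-1} | S_t = j, X_{t+1}^{T-1} = x_{t+1}^{T-1})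
  = ∑_k P(S_{t+1} = k | S_t = j, X_{t+1}^{T-1} = x_{t+1}^{T-1})
      { H(S_{t+2}^{T-1} | S_{t+1} = k, X_{t+2}^{T-1} = x_{t+2}^{T-1})
        − log P(S_{t+1} = k | S_t = j, X_{t+1}^{T-1} = x_{t+1}^{T-1}) }`,
the sum ranging over the states `k` with positive conditional probability, and with
the inner entropy term read as `0` when `t = T-2`. -/
theorem hmc_hernando_backward_recursion
    {J V T : ℕ} [NeZero J] [NeZero T] (M : HMCModel J V T)
    (x : Fin T → Fin V) (t : Fin T) (ht : (t : ℕ) < T - 1) (j : Fin J)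
    (hpos : 0 < M.pr (fun s y => s t = j ∧ ∀ r : Fin T, t < r → y r = x r))
    (q : Fin J → ℝ)
    (hq : ∀ k, q k = M.cpr (fun s _ => s (t + 1) = k)
        (fun s y => s t = j ∧ ∀ r : Fin T, t < r → y r = x r)) :
    M.condEnt (suffixVar ((t : ℕ) + 1))
        (fun s y => s t = j ∧ ∀ r : Fin T, t < r → y r = x r)
      = ∑ k ∈ Finset.univ.filter (fun k : Fin J => 0 < q k),
          q k * ((if (t : ℕ) = T - 2 then 0
                  else M.condEnt (suffixVar ((t : ℕ) + 2))
                      (fun s y => s (t + 1) = k ∧ ∀ r : Fin T, t + 1 < r → y r = x r))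
                 - Real.log (q k)) := by
  classical
  have hT2 : (t : ℕ) + 1 < T := by omega
  have ht1 : ((t + 1 : Fin T) : ℕ) = (t : ℕ) + 1 := by
    rw [Fin.add_def]
    show ((t : ℕ) + ((1 : Fin T) : ℕ)) % T = (t : ℕ) + 1
    have h1 : ((1 : Fin T) : ℕ) = 1 := by
      have h2 := Fin.val_one' T
      rwa [Nat.mod_eq_of_lt (by omega)] at h2
    rw [h1, Nat.mod_eq_of_lt hT2]
  have hchain := M.chain_rule ((t : ℕ) + 1) (t + 1) ht1
    (fun s y => s t = j ∧ ∀ r : Fin T, t < r → y r = x r) hpos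
  rw [hchain]
  have hqnn : ∀ k, 0 ≤ q k := fun k => (hq k).symm ▸ M.cpr_nonneg _ _
  refine Eq.trans (Finset.sum_filter_of_ne fun k _ hne => ?_).symm
    (Finset.sum_congr rfl fun k hk => ?_)
  · -- terms with q k = 0 vanish
    by_contra hk
    have hk0 : q k = 0 := le_antisymm (not_lt.mp hk) (hqnn k)
    have hcpr0 : M.cpr (fun s _ => s (t + 1) = k)
        (fun s y => s t = j ∧ ∀ r : Fin T, t < r → y r = x r) = 0 := by
      rw [← hq k]; exact hk0
    rw [hcpr0] at hne
    simp at hne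
  · -- terms with q k > 0
    simp only [Finset.mem_filter, Finset.mem_univ, true_and] at hk
    have hqk : M.cpr (fun s _ => s (t + 1) = k)
        (fun s y => s t = j ∧ ∀ r : Fin T, t < r → y r = x r) = q k := (hq k).symm
    rw [hqk]
    have hEkpos : 0 < M.pr (fun s y => s (t + 1) = k ∧
        (s t = j ∧ ∀ r : Fin T, t < r → y r = x r)) := by
      have h1 : q k = M.pr (fun s y => s (t + 1) = k ∧
          (s t = j ∧ ∀ r : Fin T, t < r → y r = x r)) / M.pr
          (fun s y => s t = j ∧ ∀ r : Fin T, t < r → y r = x r) := by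
        rw [hq k]
        unfold cpr
        rw [if_pos hpos]
      rcases lt_or_eq_of_le (M.pr_nonneg (fun s y => s (t + 1) = k ∧
          (s t = j ∧ ∀ r : Fin T, t < r → y r = x r))) with h | h
      · exact h
      · exfalso
        rw [h1, ← h, zero_div] at hk
        exact lt_irrefl 0 hk
    have hHk : M.condEnt (suffixVar ((t : ℕ) + 1 + 1))
        (fun s y => s (t + 1) = k ∧
          (fun s y => s t = j ∧ ∀ r : Fin T, t < r → y r = x r) s y)
        = (if (t : ℕ) = T - 2 then 0
            else M.condEnt (suffixVar ((t : ℕ) + 2))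
              (fun s y => s (t + 1) = k ∧ ∀ r : Fin T, t + 1 < r → y r = x r)) := by
      have hnorm : M.condEnt (suffixVar ((t : ℕ) + 1 + 1))
          (fun s y => s (t + 1) = k ∧
            (fun s y => s t = j ∧ ∀ r : Fin T, t < r → y r = x r) s y)
          = M.condEnt (suffixVar ((t : ℕ) + 2))
            (fun s y => s (t + 1) = k ∧
              (s t = j ∧ ∀ r : Fin T, t < r → y r = x r)) := by
        have h12 : (t : ℕ) + 1 + 1 = (t : ℕ) + 2 := rfl
        rw [h12]
      rw [hnorm]
      by_cases hcase : (t : ℕ) = T - 2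
      · rw [if_pos hcase]
        exact M.condEnt_suffix_top (by omega) _
      · rw [if_neg hcase]
        have htT : (t : ℕ) + 2 < T + 1 := by omega
        refine M.markov_condEnt ((t : ℕ) + 2) (by omega) (t + 1) (by omega) k x
          _ _ ?_ ?_ ?_ ?_ ?_ ?_ ?_ hEkpos
        · intro s s' y h
          have e1 : s (t + 1) = s' (t + 1) := h (t + 1) (by omega)
          have e2 : s t = s' t := h t (by omega)
          rw [e1, e2]
        · intro s y h
          exact h.1
        · intro s y h r hr
          exact h.2.2 r (by rw [Fin.lt_def]; omega)
        · intro s s' y h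
          have e1 : s (t + 1) = s' (t + 1) := h (t + 1) (by omega)
          rw [e1]
        · intro s y h
          exact h.1
        · intro s y h r hr
          exact h.2 r (by rw [Fin.lt_def]; omega)
        · intro s y h
          refine ⟨h.1, fun r hr => h.2.2 r ?_⟩
          rw [Fin.lt_def] at hr ⊢
          omega
    rw [hHk]
    ring
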